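/- Let a, b > 0 with a ≠ b, let E = {(x, y) ∈ ℝ² : x²/a² + y²/b² = 1} be the ellipse, and set c = ab/√(a² + b²). Then the four points (c, c), (−c, c), (−c, −c), (c, −c) lie on E and are the consecutive vertices of a square, and this is the unique square inscribed in E: every 4-tuple of pairwise distinct points of E forming the consecutive vertices of a square has vertex set {(c, c), (−c, c), (−c, −c), (c, −c)}. -/

import Mathlib

open Real

noncomputable section

/-- The ellipse with semiaxes `a` and `b`. -/
def ellipse (a b : ℝ) : Set (EuclideanSpace ℝ (Fin 2)) :=
  {p | (p 0) ^ 2 / a ^ 2 + (p 1) ^ 2 / b ^ 2 = 1}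

/-- `y₁, y₂, y₃, y₄` are the consecutive vertices of a square. -/
def IsSquare4 (y₁ y₂ y₃ y₄ : EuclideanSpace ℝ (Fin 2)) : Prop :=
  y₁ ≠ y₂ ∧ y₁ ≠ y₃ ∧ y₁ ≠ y₄ ∧ y₂ ≠ y₃ ∧ y₂ ≠ y₄ ∧ y₃ ≠ y₄ ∧
  y₁ + y₃ = y₂ + y₄ ∧ ‖y₁ - y₂‖ = ‖y₂ - y₃‖ ∧
  (inner ℝ (y₂ - y₁) (y₃ - y₂) : ℝ) = 0

lemma vec_ext (p : EuclideanSpace ℝ (Fin 2)) : p = !₂[p 0, p 1] := by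
  ext i; fin_cases i <;> rfl

lemma inner_coords (p q : EuclideanSpace ℝ (Fin 2)) :
    (inner ℝ p q : ℝ) = p 0 * q 0 + p 1 * q 1 := by
  simp [PiLp.inner_apply, Fin.sum_univ_two, RCLike.inner_apply, conj_trivial]; ring

lemma norm_sq_coords (p : EuclideanSpace ℝ (Fin 2)) :
    ‖p‖^2 = (p 0)^2 + (p 1)^2 := by
  rw [← real_inner_self_eq_norm_sq, inner_coords]; ring

lemma norm_eq_of_sq (u v : EuclideanSpace ℝ (Fin 2)) (h : ‖u‖^2 = ‖v‖^2) :
    ‖u‖ = ‖v‖ := by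
  rw [← Real.sqrt_sq (norm_nonneg u), ← Real.sqrt_sq (norm_nonneg v), h]

lemma mem_corner (c : ℝ) (p : EuclideanSpace ℝ (Fin 2))
    (hx : (p 0)^2 = c^2) (hy : (p 1)^2 = c^2) :
    p ∈ ({!₂[c, c], !₂[-c, c], !₂[-c, -c], !₂[c, -c]} :
      Set (EuclideanSpace ℝ (Fin 2))) := by
  have hx' : p 0 = c ∨ p 0 = -c := by
    rcases mul_eq_zero.mp (show (p 0 - c)*(p 0 + c) = 0 by linear_combination hx)
      with h | h
    · left; linarith
    · right; linarith
  have hy' : p 1 = c ∨ p 1 = -c := by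
    rcases mul_eq_zero.mp (show (p 1 - c)*(p 1 + c) = 0 by linear_combination hy)
      with h | h
    · left; linarith
    · right; linarith
  have hp := vec_ext p
  rcases hx' with h0 | h0 <;> rcases hy' with h1 | h1 <;>
    rw [h0, h1] at hp <;> simp [hp, Set.mem_insert_iff]

lemma main_real (a b c x1 y1 x2 y2 x3 y3 x4 y4 : ℝ)
    (ha : 0 < a) (hb : 0 < b) (hab : a ≠ b)
    (hc2 : c^2 * (a^2+b^2) = a^2*b^2)
    (hE1 : b^2*x1^2 + a^2*y1^2 = a^2*b^2)
    (hE2 : b^2*x2^2 + a^2*y2^2 = a^2*b^2)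
    (hE3 : b^2*x3^2 + a^2*y3^2 = a^2*b^2)
    (hE4 : b^2*x4^2 + a^2*y4^2 = a^2*b^2)
    (hax : x1 + x3 = x2 + x4) (hay : y1 + y3 = y2 + y4)
    (hN : (x1-x2)^2+(y1-y2)^2 = (x2-x3)^2+(y2-y3)^2)
    (hO : (x2-x1)*(x3-x2)+(y2-y1)*(y3-y2) = 0)
    (hne : x1 ≠ x3 ∨ y1 ≠ y3) :
    x1^2 = c^2 ∧ y1^2 = c^2 ∧ x2^2 = c^2 ∧ y2^2 = c^2 ∧
    x3^2 = c^2 ∧ y3^2 = c^2 ∧ x4^2 = c^2 ∧ y4^2 = c^2 := by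
  have hx4 : x4 = x1 + x3 - x2 := by linarith
  have hy4 : y4 = y1 + y3 - y2 := by linarith
  have hE4' : b^2*(x1+x3-x2)^2 + a^2*(y1+y3-y2)^2 = a^2*b^2 := by
    rw [← hx4, ← hy4]; exact hE4
  have hSpos : 0 < (x3-x1)^2 + (y3-y1)^2 := by
    rcases hne with h | h
    · have h' : x3 - x1 ≠ 0 := sub_ne_zero.mpr (Ne.symm h); positivity
    · have h' : y3 - y1 ≠ 0 := sub_ne_zero.mpr (Ne.symm h); positivity
  have hb2 : (b:ℝ)^2 ≠ 0 := by positivity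
  have ha2 : (a:ℝ)^2 ≠ 0 := by positivity
  have hdot : (x3-x1)*(x1+x3-2*x2) + (y3-y1)*(y1+y3-2*y2) = 0 := by
    linear_combination -hN
  have hSeq : (x3-x1)^2+(y3-y1)^2 = (x1+x3-2*x2)^2+(y1+y3-2*y2)^2 := by
    linear_combination 4*hO
  have hcross : ((x3-x1)*(y1+y3-2*y2) - (y3-y1)*(x1+x3-2*x2))^2
      = ((x3-x1)^2+(y3-y1)^2)^2 := by
    linear_combination (-((x3-x1)^2+(y3-y1)^2))*hSeq
      - ((x3-x1)*(x1+x3-2*x2) + (y3-y1)*(y1+y3-2*y2))*hdot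
  have hB1 : b^2*(x1+x3)*(x3-x1) + a^2*(y1+y3)*(y3-y1) = 0 := by
    linear_combination hE3 - hE1
  have hB2 : b^2*(x1+x3)*(x1+x3-2*x2) + a^2*(y1+y3)*(y1+y3-2*y2) = 0 := by
    linear_combination hE4' - hE2
  have hfac : (((x3-x1)*(y1+y3-2*y2) - (y3-y1)*(x1+x3-2*x2))
        - ((x3-x1)^2+(y3-y1)^2))
      * (((x3-x1)*(y1+y3-2*y2) - (y3-y1)*(x1+x3-2*x2))
        + ((x3-x1)^2+(y3-y1)^2)) = 0 := by
    linear_combination hcross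
  have key : x1 + x3 = 0 ∧ y1 + y3 = 0 ∧
      (x1+x3-2*x2)^2 = (y3-y1)^2 ∧ (y1+y3-2*y2)^2 = (x3-x1)^2 := by
    rcases mul_eq_zero.mp hfac with h | h
    · have hcr : (x3-x1)*(y1+y3-2*y2) - (y3-y1)*(x1+x3-2*x2)
          = (x3-x1)^2+(y3-y1)^2 := by linarith
      have e1 : ((x3-x1)^2+(y3-y1)^2) * ((x1+x3-2*x2) + (y3-y1)) = 0 := by
        linear_combination (x3-x1)*hdot - (y3-y1)*hcr
      have hVx : x1+x3-2*x2 = -(y3-y1) := by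
        have := (mul_eq_zero.mp e1).resolve_left hSpos.ne'
        linarith
      have e2 : ((x3-x1)^2+(y3-y1)^2) * ((y1+y3-2*y2) - (x3-x1)) = 0 := by
        linear_combination (y3-y1)*hdot + (x3-x1)*hcr
      have hVy : y1+y3-2*y2 = x3-x1 := by
        have := (mul_eq_zero.mp e2).resolve_left hSpos.ne'
        linarith
      rw [hVx, hVy] at hB2
      have hMb : ((x3-x1)^2+(y3-y1)^2) * (b^2*(x1+x3)) = 0 := by
        linear_combination (x3-x1)*hB1 - (y3-y1)*hB2
      have hMa : ((x3-x1)^2+(y3-y1)^2) * (a^2*(y1+y3)) = 0 := by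
        linear_combination (y3-y1)*hB1 + (x3-x1)*hB2
      have hMx : x1 + x3 = 0 :=
        ((mul_eq_zero.mp ((mul_eq_zero.mp hMb).resolve_left hSpos.ne')).resolve_left hb2)
      have hMy : y1 + y3 = 0 :=
        ((mul_eq_zero.mp ((mul_eq_zero.mp hMa).resolve_left hSpos.ne')).resolve_left ha2)
      exact ⟨hMx, hMy, by rw [hVx]; ring, by rw [hVy]⟩
    · have hcr : (x3-x1)*(y1+y3-2*y2) - (y3-y1)*(x1+x3-2*x2)
          = -((x3-x1)^2+(y3-y1)^2) := by linarith
      have e1 : ((x3-x1)^2+(y3-y1)^2) * ((x1+x3-2*x2) - (y3-y1)) = 0 := by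
        linear_combination (x3-x1)*hdot - (y3-y1)*hcr
      have hVx : x1+x3-2*x2 = y3-y1 := by
        have := (mul_eq_zero.mp e1).resolve_left hSpos.ne'
        linarith
      have e2 : ((x3-x1)^2+(y3-y1)^2) * ((y1+y3-2*y2) + (x3-x1)) = 0 := by
        linear_combination (y3-y1)*hdot + (x3-x1)*hcr
      have hVy : y1+y3-2*y2 = -(x3-x1) := by
        have := (mul_eq_zero.mp e2).resolve_left hSpos.ne'
        linarith
      rw [hVx, hVy] at hB2
      have hMb : ((x3-x1)^2+(y3-y1)^2) * (b^2*(x1+x3)) = 0 := by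
        linear_combination (x3-x1)*hB1 + (y3-y1)*hB2
      have hMa : ((x3-x1)^2+(y3-y1)^2) * (a^2*(y1+y3)) = 0 := by
        linear_combination (y3-y1)*hB1 - (x3-x1)*hB2
      have hMx : x1 + x3 = 0 :=
        ((mul_eq_zero.mp ((mul_eq_zero.mp hMb).resolve_left hSpos.ne')).resolve_left hb2)
      have hMy : y1 + y3 = 0 :=
        ((mul_eq_zero.mp ((mul_eq_zero.mp hMa).resolve_left hSpos.ne')).resolve_left ha2)
      exact ⟨hMx, hMy, by rw [hVx], by rw [hVy]; ring⟩
  obtain ⟨hMx, hMy, hVx2, hVy2⟩ := key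
  have hq1 : b^2*(x3-x1)^2 + a^2*(y3-y1)^2 = 4*a^2*b^2 := by
    linear_combination 2*hE1 + 2*hE3 - b^2*(x1+x3)*hMx - a^2*(y1+y3)*hMy
  have hq2 : b^2*(y3-y1)^2 + a^2*(x3-x1)^2 = 4*a^2*b^2 := by
    linear_combination 2*hE2 + 2*hE4' - b^2*(x1+x3)*hMx - a^2*(y1+y3)*hMy
      - b^2*hVx2 - a^2*hVy2
  have hba2 : b^2 - a^2 ≠ 0 := by
    have h1 : (a-b)*(a+b) ≠ 0 :=
      mul_ne_zero (sub_ne_zero.mpr hab) (by positivity)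
    intro h; exact h1 (by linear_combination -h)
  have h6 : (b^2-a^2)*((x3-x1)^2 - (y3-y1)^2) = 0 := by
    linear_combination hq1 - hq2
  have hWxy : (x3-x1)^2 = (y3-y1)^2 := by
    have := (mul_eq_zero.mp h6).resolve_left hba2
    linarith
  have hab2 : (a:ℝ)^2 + b^2 ≠ 0 := by positivity
  have hW4 : (a^2+b^2) * ((x3-x1)^2 - 4*c^2) = 0 := by
    linear_combination hq1 + a^2*hWxy - 4*hc2
  have hWx2 : (x3-x1)^2 = 4*c^2 := by
    have := (mul_eq_zero.mp hW4).resolve_left hab2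
    linarith
  have hWy2 : (y3-y1)^2 = 4*c^2 := by linear_combination hWx2 - hWxy
  have hx1 : x1^2 = c^2 := by
    linear_combination (1/4)*hWx2 + (x1 - (x1+x3)/4)*hMx
  have hx3 : x3^2 = c^2 := by
    linear_combination (1/4)*hWx2 + (x3 - (x1+x3)/4)*hMx
  have hy1 : y1^2 = c^2 := by
    linear_combination (1/4)*hWy2 + (y1 - (y1+y3)/4)*hMy
  have hy3 : y3^2 = c^2 := by
    linear_combination (1/4)*hWy2 + (y3 - (y1+y3)/4)*hMy
  have hx2 : x2^2 = c^2 := by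
    linear_combination (1/4)*hVx2 + (1/4)*hWy2 + (x2 - (x1+x3)/4)*hMx
  have hy2 : y2^2 = c^2 := by
    linear_combination (1/4)*hVy2 + (1/4)*hWx2 + (y2 - (y1+y3)/4)*hMy
  have hx4' : x4^2 = c^2 := by
    linear_combination (x4+x1+x3-x2)*hx4 + (x1+x3-2*x2)*hMx + hx2
  have hy4' : y4^2 = c^2 := by
    linear_combination (y4+y1+y3-y2)*hy4 + (y1+y3-2*y2)*hMy + hy2
  exact ⟨hx1, hy1, hx2, hy2, hx3, hy3, hx4', hy4'⟩

/-- A noncircular ellipse has a unique inscribed square, namely the one with vertices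
`(±c, ±c)` where `c = ab/√(a² + b²)`. -/
theorem ellipse_unique_inscribed_square
    (a b : ℝ) (ha : 0 < a) (hb : 0 < b) (hab : a ≠ b)
    (c : ℝ) (hc : c = a * b / Real.sqrt (a ^ 2 + b ^ 2)) :
    ((!₂[c, c] : EuclideanSpace ℝ (Fin 2)) ∈ ellipse a b ∧
     (!₂[-c, c] : EuclideanSpace ℝ (Fin 2)) ∈ ellipse a b ∧
     (!₂[-c, -c] : EuclideanSpace ℝ (Fin 2)) ∈ ellipse a b ∧
     (!₂[c, -c] : EuclideanSpace ℝ (Fin 2)) ∈ ellipse a b ∧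
     IsSquare4 !₂[c, c] !₂[-c, c] !₂[-c, -c] !₂[c, -c]) ∧
    ∀ z₁ z₂ z₃ z₄ : EuclideanSpace ℝ (Fin 2),
      z₁ ∈ ellipse a b → z₂ ∈ ellipse a b → z₃ ∈ ellipse a b → z₄ ∈ ellipse a b →
      IsSquare4 z₁ z₂ z₃ z₄ →
      ({z₁, z₂, z₃, z₄} : Set (EuclideanSpace ℝ (Fin 2))) =
        {(!₂[c, c] : EuclideanSpace ℝ (Fin 2)), !₂[-c, c], !₂[-c, -c], !₂[c, -c]} := by
  have hs : 0 < Real.sqrt (a^2+b^2) := Real.sqrt_pos.mpr (by positivity)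
  have hc2 : c^2 * (a^2+b^2) = a^2*b^2 := by
    rw [hc, div_pow, Real.sq_sqrt (by positivity : (0:ℝ) ≤ a^2+b^2)]
    field_simp
  have hcpos : 0 < c := by rw [hc]; positivity
  have hmem : ∀ u v : ℝ, u^2 = c^2 → v^2 = c^2 →
      (!₂[u, v] : EuclideanSpace ℝ (Fin 2)) ∈ ellipse a b := by
    intro u v hu hv
    show u^2/a^2 + v^2/b^2 = 1
    rw [hu, hv]
    field_simp
    linear_combination hc2
  have hnecc : c ≠ -c := by intro h; linarith
  constructor
  · refine ⟨hmem c c rfl rfl, hmem (-c) c (by ring) rfl,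
      hmem (-c) (-c) (by ring) (by ring), hmem c (-c) rfl (by ring), ?_⟩
    refine ⟨?_, ?_, ?_, ?_, ?_, ?_, ?_, ?_, ?_⟩
    · intro h; have h0 := congrArg (fun p : EuclideanSpace ℝ (Fin 2) => p 0) h; simp at h0; linarith
    · intro h; have h0 := congrArg (fun p : EuclideanSpace ℝ (Fin 2) => p 0) h; simp at h0; linarith
    · intro h; have h0 := congrArg (fun p : EuclideanSpace ℝ (Fin 2) => p 1) h; simp at h0; linarith
    · intro h; have h0 := congrArg (fun p : EuclideanSpace ℝ (Fin 2) => p 1) h; simp at h0; linarith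
    · intro h; have h0 := congrArg (fun p : EuclideanSpace ℝ (Fin 2) => p 0) h; simp at h0; linarith
    · intro h; have h0 := congrArg (fun p : EuclideanSpace ℝ (Fin 2) => p 0) h; simp at h0; linarith
    · ext i; fin_cases i <;> simp [PiLp.add_apply]
    · apply norm_eq_of_sq
      rw [norm_sq_coords, norm_sq_coords]
      simp [PiLp.sub_apply]
    · rw [inner_coords]
      simp [PiLp.sub_apply]
  · intro z₁ z₂ z₃ z₄ h1 h2 h3 h4 hsq
    obtain ⟨n12, n13, n14, n23, n24, n34, hadd, hnrm, hinn⟩ := hsq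
    have cv : ∀ z ∈ ellipse a b, b^2*(z 0)^2 + a^2*(z 1)^2 = a^2*b^2 := by
      intro z hz
      simp only [ellipse, Set.mem_setOf_eq] at hz
      field_simp at hz
      linear_combination hz
    have hE1 := cv z₁ h1
    have hE2 := cv z₂ h2
    have hE3 := cv z₃ h3
    have hE4 := cv z₄ h4
    have hax : z₁ 0 + z₃ 0 = z₂ 0 + z₄ 0 := by
      have := congrArg (fun p : EuclideanSpace ℝ (Fin 2) => p 0) hadd; simpa using this
    have hay : z₁ 1 + z₃ 1 = z₂ 1 + z₄ 1 := by
      have := congrArg (fun p : EuclideanSpace ℝ (Fin 2) => p 1) hadd; simpa using this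
    have hN : (z₁ 0 - z₂ 0)^2 + (z₁ 1 - z₂ 1)^2
        = (z₂ 0 - z₃ 0)^2 + (z₂ 1 - z₃ 1)^2 := by
      have h : ‖z₁ - z₂‖^2 = ‖z₂ - z₃‖^2 := by rw [hnrm]
      rw [norm_sq_coords, norm_sq_coords] at h
      simpa [PiLp.sub_apply] using h
    have hO : (z₂ 0 - z₁ 0)*(z₃ 0 - z₂ 0) + (z₂ 1 - z₁ 1)*(z₃ 1 - z₂ 1) = 0 := by
      rw [inner_coords] at hinn
      simpa [PiLp.sub_apply] using hinn
    have hne : z₁ 0 ≠ z₃ 0 ∨ z₁ 1 ≠ z₃ 1 := by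
      by_contra h
      push_neg at h
      exact n13 (by rw [vec_ext z₁, vec_ext z₃, h.1, h.2])
    obtain ⟨hx1, hy1, hx2, hy2, hx3, hy3, hx4, hy4⟩ :=
      main_real a b c (z₁ 0) (z₁ 1) (z₂ 0) (z₂ 1) (z₃ 0) (z₃ 1) (z₄ 0) (z₄ 1)
        ha hb hab hc2 hE1 hE2 hE3 hE4 hax hay hN hO hne
    have hsub : ({z₁, z₂, z₃, z₄} : Set (EuclideanSpace ℝ (Fin 2))) ⊆
        {!₂[c, c], !₂[-c, c], !₂[-c, -c], !₂[c, -c]} := by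
      intro p hp
      simp only [Set.mem_insert_iff, Set.mem_singleton_iff] at hp
      rcases hp with rfl | rfl | rfl | rfl
      · exact mem_corner c p hx1 hy1
      · exact mem_corner c p hx2 hy2
      · exact mem_corner c p hx3 hy3
      · exact mem_corner c p hx4 hy4
    have hcard : ({z₁, z₂, z₃, z₄} : Set (EuclideanSpace ℝ (Fin 2))).ncard = 4 := by
      rw [Set.ncard_insert_of_notMem (by simp [n12, n13, n14]),
        Set.ncard_insert_of_notMem (by simp [n23, n24]),
        Set.ncard_pair n34]
    have h4 : ({!₂[c, c], !₂[-c, c], !₂[-c, -c], !₂[c, -c]} :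
        Set (EuclideanSpace ℝ (Fin 2))).ncard ≤ 4 := by
      have h0 := Set.ncard_insert_le (!₂[c, c] : EuclideanSpace ℝ (Fin 2))
        ({!₂[-c, c], !₂[-c, -c], !₂[c, -c]} : Set (EuclideanSpace ℝ (Fin 2)))
      have hh1 := Set.ncard_insert_le (!₂[-c, c] : EuclideanSpace ℝ (Fin 2))
        ({!₂[-c, -c], !₂[c, -c]} : Set (EuclideanSpace ℝ (Fin 2)))
      have hh2 := Set.ncard_insert_le (!₂[-c, -c] : EuclideanSpace ℝ (Fin 2))
        ({!₂[c, -c]} : Set (EuclideanSpace ℝ (Fin 2)))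
      have hh3 := Set.ncard_singleton (!₂[c, -c] : EuclideanSpace ℝ (Fin 2))
      omega
    exact Set.eq_of_subset_of_ncard_le hsub (by rw [hcard]; exact h4)
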